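/- Let n ≥ 5 and let A = 2^{1/n}·M, where M is the real n×n matrix with M_{ii} = 1 for 1 ≤ i ≤ n−1, M_{in} = 1/2 for 1 ≤ i ≤ n, and all other entries 0. Then syst(A) = 2^{1/n}. -/

import Mathlib

/-- The Euclidean norm of a vector in `ℝⁿ`. -/
noncomputable def eNorm {n : ℕ} (x : Fin n → ℝ) : ℝ :=
  Real.sqrt (∑ i, (x i) ^ 2)

/-- The Euclidean norm of `A v` for an integer vector `v`. -/
noncomputable def latNorm {n : ℕ} (A : Matrix (Fin n) (Fin n) ℝ) (v : Fin n → ℤ) : ℝ :=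
  eNorm (A.mulVec (fun i => (v i : ℝ)))

/-- The systole of `A`: the infimum (in fact minimum) of `‖A v‖` over nonzero
integer vectors `v ∈ ℤⁿ`. -/
noncomputable def syst {n : ℕ} (A : Matrix (Fin n) (Fin n) ℝ) : ℝ :=
  sInf {r | ∃ v : Fin n → ℤ, v ≠ 0 ∧ r = latNorm A v}

/-- The matrix `M` with `M i i = 1` for `i` in the upper-left `(n-1) × (n-1)` block,
last column constantly `1/2`, and all other entries `0`. -/
noncomputable def Mmat (n : ℕ) : Matrix (Fin n) (Fin n) ℝ :=
  Matrix.of fun i j => if (j : ℕ) = n - 1 then 1 / 2 else if i = j then 1 else 0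

/-- The matrix `A = 2^(1/n) • M` (which has determinant `1`). -/
noncomputable def Amat (n : ℕ) : Matrix (Fin n) (Fin n) ℝ :=
  ((2 : ℝ) ^ ((1 : ℝ) / n)) • Mmat n

lemma mulVec_Mmat {n : ℕ} (hn : 1 ≤ n) (x : Fin n → ℝ) (i : Fin n) :
    (Mmat n).mulVec x i
      = (if (i : ℕ) = n - 1 then 0 else x i) + x ⟨n - 1, by omega⟩ / 2 := by
  classical
  set L : Fin n := ⟨n - 1, by omega⟩ with hLdef
  have hcoe : ∀ j : Fin n, ((j : ℕ) = n - 1) ↔ j = L := fun j =>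
    ⟨fun h => Fin.ext h, fun h => by rw [h]⟩
  have : (Mmat n).mulVec x i
      = ∑ j, ((if j = L then x L / 2 else 0) +
          (if j = i then (if (i : ℕ) = n - 1 then 0 else x i) else 0)) := by
    unfold Mmat Matrix.mulVec dotProduct
    refine Finset.sum_congr rfl fun j _ => ?_
    simp only [Matrix.of_apply, hcoe]
    by_cases h : j = L <;> by_cases h2 : i = j <;>
      simp_all [eq_comm] <;> try ring
  rw [this, Finset.sum_add_distrib, Finset.sum_ite_eq' Finset.univ L,
    Finset.sum_ite_eq' Finset.univ i]
  simp [add_comm]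

/-- Integer core: for nonzero `v`, `4 ≤ ∑ (m i)^2` where
`m i = if i = L then v L else 2 * v i + v L`. -/
lemma int_core {n : ℕ} (hn : 5 ≤ n) (v : Fin n → ℤ) (hv : v ≠ 0) :
    4 ≤ ∑ i : Fin n, (if (i : ℕ) = n - 1 then v i else 2 * v i + v ⟨n - 1, by omega⟩) ^ 2 := by
  classical
  set L : Fin n := ⟨n - 1, by omega⟩ with hLdef
  have hLcoe : (L : ℕ) = n - 1 := rfl
  set m : Fin n → ℤ := fun i => if (i : ℕ) = n - 1 then v i else 2 * v i + v L with hm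
  show 4 ≤ ∑ i : Fin n, m i ^ 2
  have hmL : m L = v L := by simp [hm, hLcoe]
  rcases Int.even_or_odd (v L) with ⟨s, hs⟩ | hodd
  · -- even case
    set k : Fin n → ℤ := fun i => if (i : ℕ) = n - 1 then s else v i + s with hk
    have hmk : ∀ i, m i = 2 * k i := by
      intro i
      by_cases h : (i : ℕ) = n - 1
      · have : i = L := Fin.ext h
        simp [hm, hk, h, this, hs]; ring
      · simp [hm, hk, h, hs]; ring
    have hksum : ∑ i, m i ^ 2 = 4 * ∑ i, k i ^ 2 := by
      rw [Finset.mul_sum]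
      exact Finset.sum_congr rfl fun i _ => by rw [hmk i]; ring
    have hkne : ∃ i, k i ≠ 0 := by
      by_contra hc
      push_neg at hc
      have hs0 : s = 0 := by simpa [hk, hLcoe] using hc L
      apply hv
      funext i
      simp only [Pi.zero_apply]
      by_cases h : (i : ℕ) = n - 1
      · have hiL : i = L := Fin.ext h
        rw [hiL, hs, hs0]; ring
      · have := hc i
        simp [hk, h] at this
        omega
    obtain ⟨i0, hi0⟩ := hkne
    have h1 : 1 ≤ k i0 ^ 2 := by
      have := Int.one_le_abs (by simpa using hi0)
      nlinarith [sq_abs (k i0)]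
    have : (1 : ℤ) ≤ ∑ i, k i ^ 2 := by
      calc (1:ℤ) ≤ k i0 ^ 2 := h1
        _ ≤ ∑ i, k i ^ 2 :=
          Finset.single_le_sum (fun i _ => sq_nonneg (k i)) (Finset.mem_univ i0)
    omega
  · -- odd case : every m i is odd hence m i ^ 2 ≥ 1
    have hodd' : ∀ i, Odd (m i) := by
      intro i
      by_cases h : (i : ℕ) = n - 1
      · simpa [hm, h, hLcoe, show i = L from Fin.ext h] using hodd
      · simp only [hm, h, if_false]
        rcases hodd with ⟨t, ht⟩
        exact ⟨v i + t, by omega⟩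
    have h1 : ∀ i ∈ Finset.univ, (1 : ℤ) ≤ m i ^ 2 := by
      intro i _
      have hne : m i ≠ 0 := by
        intro h0
        have hev : Even (m i) := by rw [h0]; exact Even.zero
        exact (Int.not_odd_iff_even.mpr hev) (hodd' i)
      have := Int.one_le_abs hne
      nlinarith [sq_abs (m i)]
    have : (Finset.univ : Finset (Fin n)).card • (1:ℤ) ≤ ∑ i, m i ^ 2 :=
      Finset.card_nsmul_le_sum _ _ _ h1
    simp only [Finset.card_univ, Fintype.card_fin, nsmul_eq_mul, mul_one] at this
    omega

lemma sum_sq_eq {n : ℕ} (hn : 5 ≤ n) (v : Fin n → ℤ) :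
    ∑ i, ((Mmat n).mulVec (fun i => (v i : ℝ)) i) ^ 2
      = (((∑ i : Fin n, (if (i : ℕ) = n - 1 then v i else 2 * v i + v ⟨n - 1, by omega⟩) ^ 2 : ℤ) : ℝ)) / 4 := by
  have h1 : 1 ≤ n := by omega
  push_cast
  rw [Finset.sum_div]
  refine Finset.sum_congr rfl fun i _ => ?_
  rw [mulVec_Mmat h1]
  by_cases h : (i : ℕ) = n - 1
  · have hi : i = (⟨n - 1, by omega⟩ : Fin n) := Fin.ext h
    rw [hi]; simp; ring
  · simp [h]; ring

lemma latNorm_Amat {n : ℕ} (hn : 5 ≤ n) (v : Fin n → ℤ) :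
    latNorm (Amat n) v
      = (2 : ℝ) ^ ((1 : ℝ) / n) *
        Real.sqrt (∑ i, ((Mmat n).mulVec (fun i => (v i : ℝ)) i) ^ 2) := by
  have hc : (0 : ℝ) < (2 : ℝ) ^ ((1 : ℝ) / n) := Real.rpow_pos_of_pos (by norm_num) _
  unfold latNorm Amat eNorm
  rw [Matrix.smul_mulVec]
  have : ∑ i, (((2 : ℝ) ^ ((1 : ℝ) / n) • (Mmat n).mulVec (fun i => (v i : ℝ))) i) ^ 2
      = ((2 : ℝ) ^ ((1 : ℝ) / n)) ^ 2 * ∑ i, ((Mmat n).mulVec (fun i => (v i : ℝ)) i) ^ 2 := by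
    rw [Finset.mul_sum]
    exact Finset.sum_congr rfl fun i _ => by simp [Pi.smul_apply, smul_eq_mul]; ring
  rw [this, Real.sqrt_mul (by positivity), Real.sqrt_sq hc.le]

/-- For `n ≥ 5` and `A = 2^(1/n) • M`, one has `syst A = 2^(1/n)`. -/
theorem syst_Amat {n : ℕ} (hn : 5 ≤ n) :
    syst (Amat n) = (2 : ℝ) ^ ((1 : ℝ) / n) := by
  classical
  haveI : NeZero n := ⟨by omega⟩
  set c : ℝ := (2 : ℝ) ^ ((1 : ℝ) / n) with hcdef
  have hc : (0 : ℝ) < c := Real.rpow_pos_of_pos (by norm_num) _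
  have hlower : ∀ r ∈ {r | ∃ v : Fin n → ℤ, v ≠ 0 ∧ r = latNorm (Amat n) v}, c ≤ r := by
    rintro r ⟨v, hv, rfl⟩
    rw [latNorm_Amat hn]
    have h4 := int_core hn v hv
    have hs : (1 : ℝ) ≤ ∑ i, ((Mmat n).mulVec (fun i => (v i : ℝ)) i) ^ 2 := by
      rw [sum_sq_eq hn]
      have : (4 : ℝ) ≤ ((∑ i : Fin n, (if (i : ℕ) = n - 1 then v i else 2 * v i + v ⟨n - 1, by omega⟩) ^ 2 : ℤ) : ℝ) := by
        exact_mod_cast h4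
      linarith
    have : (1 : ℝ) ≤ Real.sqrt (∑ i, ((Mmat n).mulVec (fun i => (v i : ℝ)) i) ^ 2) := by
      rw [show (1:ℝ) = Real.sqrt 1 by simp]
      exact Real.sqrt_le_sqrt hs
    nlinarith
  -- membership: v = e₀
  have hmem : c ∈ {r | ∃ v : Fin n → ℤ, v ≠ 0 ∧ r = latNorm (Amat n) v} := by
    refine ⟨fun i => if i = (0 : Fin n) then 1 else 0, ?_, ?_⟩
    · intro h
      have := congrFun h (0 : Fin n)
      simp at this
    · rw [latNorm_Amat hn, sum_sq_eq hn]
      have h0L : ((0 : Fin n) : ℕ) ≠ n - 1 := by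
        simp [Fin.val_zero]
        omega
      have hL0 : (⟨n - 1, by omega⟩ : Fin n) ≠ (0 : Fin n) := by
        intro h
        have := congrArg Fin.val h
        simp at this
        omega
      have hsum : (∑ i : Fin n, (if (i : ℕ) = n - 1 then (if i = (0:Fin n) then (1:ℤ) else 0)
            else 2 * (if i = (0:Fin n) then (1:ℤ) else 0) + (if (⟨n - 1, by omega⟩ : Fin n) = (0:Fin n) then (1:ℤ) else 0)) ^ 2)
          = 4 := by
        have : ∀ i : Fin n, (if (i : ℕ) = n - 1 then (if i = (0:Fin n) then (1:ℤ) else 0)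
            else 2 * (if i = (0:Fin n) then (1:ℤ) else 0) + (if (⟨n - 1, by omega⟩ : Fin n) = (0:Fin n) then (1:ℤ) else 0)) ^ 2
            = if i = (0 : Fin n) then 4 else 0 := by
          intro i
          by_cases h : i = (0 : Fin n)
          · subst h
            simp [hL0]
            omega
          · by_cases h2 : (i : ℕ) = n - 1 <;> simp [h, h2, hL0]
        rw [Finset.sum_congr rfl fun i _ => this i, Finset.sum_ite_eq' Finset.univ (0 : Fin n)]
        simp
      rw [hsum, hcdef]
      norm_num
  have hne : {r | ∃ v : Fin n → ℤ, v ≠ 0 ∧ r = latNorm (Amat n) v}.Nonempty := ⟨c, hmem⟩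
  have hbdd : BddBelow {r | ∃ v : Fin n → ℤ, v ≠ 0 ∧ r = latNorm (Amat n) v} := ⟨c, hlower⟩
  exact le_antisymm (csInf_le hbdd hmem) (le_csInf hne hlower)
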